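/- Let β_A, β_H > 0 and α_A, α_H > 0 with (β_A, α_A) ≠ (β_H, α_H) and β_A ≠ β_H (i.e. the parameters lie in P_SP,1 ∪ P_SP,2 ∪ P_SP,3ab ∪ P_SP,3c ∪ P_SP,3d, which together form the set of all strictly positive parameters with β_A ≠ β_H), and let ω₀ ≥ 1. Then the sequences of path laws (P_{A,n})_{n≥1} and (P_{H,n})_{n≥1} are entirely separated: there exist a strictly increasing sequence (n_m)_{m∈ℕ} in ℕ and sets A_m ⊆ ℕ₀^{n_m} such that Σ_{ω∈A_m} p_{A,n_m}(ω) → 1 and Σ_{ω∈A_m} p_{H,n_m}(ω) → 0 as m → ∞. -/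

import Mathlib

open Real Filter

/-- One transition weight of the Poisson Galton–Watson process with immigration:
probability that the next generation size is `y` given the previous size is `x`. -/
noncomputable def gwStep (β α : ℝ) (x y : ℕ) : ℝ :=
  Real.exp (-(β * (x : ℝ) + α)) * (β * (x : ℝ) + α) ^ y / (Nat.factorial y : ℝ)

/-- The `n`-step path law (pmf on `Fin n → ℕ`) with initial generation size `ω₀`. -/
noncomputable def gwPath (β α : ℝ) (ω₀ n : ℕ) (ω : Fin n → ℕ) : ℝ :=
  ∏ k : Fin n,
    gwStep β α
      (if (k : ℕ) = 0 then ω₀ else ω ⟨(k : ℕ) - 1, Nat.lt_of_le_of_lt (Nat.sub_le _ _) k.2⟩)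
      (ω k)

/-- Hellinger integral of order `lam` between the `n`-step path laws. -/
noncomputable def hellinger (βA αA βH αH lam : ℝ) (ω₀ n : ℕ) : ℝ :=
  ∑' ω : Fin n → ℕ, gwPath βA αA ω₀ n ω ^ lam * gwPath βH αH ω₀ n ω ^ (1 - lam)

/-- The recursion `a₀ = 0`, `a_{n+1} = q·e^{a_n} − βl`. -/
noncomputable def aSeq (q βl : ℝ) : ℕ → ℝ
  | 0 => 0
  | n + 1 => q * Real.exp (aSeq q βl n) - βl

/-- The recursion `b₀ = 0`, `b_{n+1} = p·e^{a_n} − αl`. -/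
noncomputable def bSeq (p q βl αl : ℝ) : ℕ → ℝ
  | 0 => 0
  | n + 1 => p * Real.exp (aSeq q βl n) - αl

/-- Poisson weight. -/
noncomputable def poi (t : ℝ) (y : ℕ) : ℝ := Real.exp (-t) * t ^ y / (Nat.factorial y : ℝ)

lemma summable_poi (t : ℝ) : Summable (poi t) := by
  have := (Real.summable_pow_div_factorial t).mul_left (Real.exp (-t))
  refine this.congr fun y => ?_
  simp [poi, mul_div_assoc]

lemma tsum_poi (t : ℝ) : ∑' y, poi t y = Real.exp t * Real.exp (-t) := by
  have h : ∑' y : ℕ, t ^ y / (Nat.factorial y : ℝ) = Real.exp t := by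
    rw [Real.exp_eq_exp_ℝ, NormedSpace.exp_eq_tsum_div]
  rw [show poi t = fun y => Real.exp (-t) * (t ^ y / (Nat.factorial y : ℝ)) by
    funext y; simp [poi, mul_div_assoc]]
  rw [tsum_mul_left, h, mul_comm]

lemma tsum_poi_one (t : ℝ) : ∑' y, poi t y = 1 := by
  rw [tsum_poi, ← Real.exp_add]; simp

lemma poi_nonneg {t : ℝ} (ht : 0 ≤ t) (y : ℕ) : 0 ≤ poi t y := by
  unfold poi; positivity

lemma poi_pos {t : ℝ} (ht : 0 < t) (y : ℕ) : 0 < poi t y := by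
  unfold poi
  have h : (0:ℝ) < (Nat.factorial y : ℝ) := by
    exact_mod_cast Nat.factorial_pos y
  positivity

lemma quad_ge (a b c t : ℝ) (ha : 0 < a) (ht1 : 1 ≤ t) (ht2 : (|b| + |c|) / a ≤ t) :
    0 ≤ a * t ^ 2 + b * t + c := by
  have h1 : |b| + |c| ≤ a * t := by
    rw [div_le_iff₀ ha] at ht2; linarith [ht2]
  nlinarith [le_abs_self b, neg_abs_le b, le_abs_self c, neg_abs_le c, abs_nonneg b, abs_nonneg c]

-- sqrt lemma part
lemma sqrt_poi_mul (p q : ℝ) (hp : 0 ≤ p) (hq : 0 ≤ q) (y : ℕ) :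
    Real.sqrt (poi p y * poi q y)
      = Real.exp (Real.sqrt (p * q) - (p + q) / 2) * poi (Real.sqrt (p * q)) y := by
  set m := Real.sqrt (p * q) with hm
  have hm0 : 0 ≤ m := Real.sqrt_nonneg _
  have hm2 : m * m = p * q := Real.mul_self_sqrt (by positivity)
  have h1 : Real.exp (m - (p+q)/2) * Real.exp (-m) = Real.exp (-((p+q)/2)) := by
    rw [← Real.exp_add]; ring_nf
  have h2 : Real.exp (-((p+q)/2)) * Real.exp (-((p+q)/2)) = Real.exp (-p) * Real.exp (-q) := by
    rw [← Real.exp_add, ← Real.exp_add]; ring_nf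
  have h3 : (m ^ y) * (m ^ y) = p ^ y * q ^ y := by
    rw [← mul_pow, hm2, mul_pow]
  have key : poi p y * poi q y
      = (Real.exp (m - (p + q) / 2) * poi m y) ^ 2 := by
    unfold poi
    calc Real.exp (-p) * p ^ y / (Nat.factorial y : ℝ) * (Real.exp (-q) * q ^ y / (Nat.factorial y : ℝ))
        = (Real.exp (-p) * Real.exp (-q)) * (p ^ y * q ^ y)
            / ((Nat.factorial y : ℝ) * (Nat.factorial y : ℝ)) := by ring
      _ = (Real.exp (m - (p+q)/2) * Real.exp (-m)) * (Real.exp (m - (p+q)/2) * Real.exp (-m))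
            * ((m ^ y) * (m ^ y)) / ((Nat.factorial y : ℝ) * (Nat.factorial y : ℝ)) := by
          rw [h1, h3, h2]
      _ = (Real.exp (m - (p + q) / 2) * (Real.exp (-m) * m ^ y / (Nat.factorial y : ℝ))) ^ 2 := by
          ring
  have hrhs : 0 ≤ Real.exp (m - (p + q) / 2) * poi m y := by
    unfold poi; positivity
  rw [key, Real.sqrt_sq hrhs]


noncomputable def fl (β α : ℝ) (x : ℕ) : ℝ := β * x + α
noncomputable def mm (βA αA βH αH : ℝ) (x : ℕ) : ℝ :=
  Real.sqrt (fl βA αA x * fl βH αH x)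
noncomputable def ph (βA αA βH αH : ℝ) (x : ℕ) : ℝ :=
  (fl βA αA x + fl βH αH x) / 2 - mm βA αA βH αH x

section Sep

variable {βA βH αA αH : ℝ}

lemma fl_pos (hβ : 0 < βA) (hα : 0 < αA) (x : ℕ) : 0 < fl βA αA x := by
  unfold fl
  have : (0:ℝ) ≤ (x:ℝ) := Nat.cast_nonneg x
  positivity

lemma gwStep_eq_poi (β α : ℝ) (x y : ℕ) : gwStep β α x y = poi (fl β α x) y := rfl

lemma sqrt_gwStep (hβA : 0 < βA) (hβH : 0 < βH) (hαA : 0 < αA) (hαH : 0 < αH) (x y : ℕ) :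
    Real.sqrt (gwStep βA αA x y * gwStep βH αH x y)
      = Real.exp (-(ph βA αA βH αH x)) * poi (mm βA αA βH αH x) y := by
  rw [gwStep_eq_poi, gwStep_eq_poi,
    sqrt_poi_mul _ _ (fl_pos hβA hαA x).le (fl_pos hβH hαH x).le]
  have : Real.sqrt (fl βA αA x * fl βH αH x) - (fl βA αA x + fl βH αH x) / 2
      = -(ph βA αA βH αH x) := by
    unfold ph mm; ring
  rw [this]; rfl

lemma ph_nonneg (hβA : 0 < βA) (hβH : 0 < βH) (hαA : 0 < αA) (hαH : 0 < αH) (x : ℕ) :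
    0 ≤ ph βA αA βH αH x := by
  have hp := fl_pos hβA hαA x
  have hq := fl_pos hβH hαH x
  have h1 : fl βA αA x * fl βH αH x ≤ ((fl βA αA x + fl βH αH x) / 2) ^ 2 := by nlinarith [sq_nonneg (fl βA αA x - fl βH αH x)]
  have h2 : mm βA αA βH αH x ≤ (fl βA αA x + fl βH αH x) / 2 := by
    unfold mm
    calc Real.sqrt (fl βA αA x * fl βH αH x)
        ≤ Real.sqrt (((fl βA αA x + fl βH αH x) / 2) ^ 2) := Real.sqrt_le_sqrt h1
      _ = (fl βA αA x + fl βH αH x) / 2 := Real.sqrt_sq (by positivity)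
  unfold ph; linarith

lemma two_ph (hβA : 0 < βA) (hβH : 0 < βH) (hαA : 0 < αA) (hαH : 0 < αH) (x : ℕ) :
    2 * ph βA αA βH αH x
      = (Real.sqrt (fl βA αA x) - Real.sqrt (fl βH αH x)) ^ 2 := by
  have hp := (fl_pos hβA hαA x).le
  have hq := (fl_pos hβH hαH x).le
  have hs : mm βA αA βH αH x = Real.sqrt (fl βA αA x) * Real.sqrt (fl βH αH x) := by
    unfold mm; exact Real.sqrt_mul hp _
  have h1 : Real.sqrt (fl βA αA x) ^ 2 = fl βA αA x := Real.sq_sqrt hp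
  have h2 : Real.sqrt (fl βH αH x) ^ 2 = fl βH αH x := Real.sq_sqrt hq
  unfold ph; rw [hs]; nlinarith [h1, h2]

lemma ph_pos_of_ne (hβA : 0 < βA) (hβH : 0 < βH) (hαA : 0 < αA) (hαH : 0 < αH) (x : ℕ)
    (hne : fl βA αA x ≠ fl βH αH x) : 0 < ph βA αA βH αH x := by
  have hp := (fl_pos hβA hαA x).le
  have hq := (fl_pos hβH hαH x).le
  have hsne : Real.sqrt (fl βA αA x) ≠ Real.sqrt (fl βH αH x) := by
    intro h
    apply hne
    have := congrArg (fun t => t ^ 2) h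
    simpa [Real.sq_sqrt hp, Real.sq_sqrt hq] using this
  have hsub : Real.sqrt (fl βA αA x) - Real.sqrt (fl βH αH x) ≠ 0 :=
    sub_ne_zero.mpr hsne
  have h2 : 0 < (Real.sqrt (fl βA αA x) - Real.sqrt (fl βH αH x)) ^ 2 :=
    lt_of_le_of_ne (sq_nonneg _) (Ne.symm (pow_ne_zero 2 hsub))
  have := two_ph hβA hβH hαA hαH x
  linarith

lemma sq_sqrt_diff_ge (p q : ℝ) (hp : 0 < p) (hq : 0 < q)
    (hkey : 4 * (p + q) ≤ (p - q) ^ 2) :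
    2 ≤ (Real.sqrt p - Real.sqrt q) ^ 2 := by
  have hu2 : Real.sqrt p ^ 2 = p := Real.sq_sqrt hp.le
  have hv2 : Real.sqrt q ^ 2 = q := Real.sq_sqrt hq.le
  have hu0 : 0 ≤ Real.sqrt p := Real.sqrt_nonneg _
  have hv0 : 0 ≤ Real.sqrt q := Real.sqrt_nonneg _
  set u := Real.sqrt p
  set v := Real.sqrt q
  have hprod : (u - v) ^ 2 * (u + v) ^ 2 = (p - q) ^ 2 := by
    have h : (u - v) * (u + v) = p - q := by nlinarith [hu2, hv2]
    calc (u - v) ^ 2 * (u + v) ^ 2 = ((u - v) * (u + v)) ^ 2 := by ring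
      _ = (p - q) ^ 2 := by rw [h]
  have hsum : (u + v) ^ 2 ≤ 2 * (p + q) := by nlinarith [sq_nonneg (u - v)]
  have hpq : 0 < p + q := by linarith
  nlinarith [hprod, hsum, hkey, hpq, sq_nonneg (u - v), sq_nonneg (u + v)]

lemma ph_large (hβA : 0 < βA) (hβH : 0 < βH) (hαA : 0 < αA) (hαH : 0 < αH)
    (hβne : βA ≠ βH) :
    ∃ R : ℝ, ∀ x : ℕ, R ≤ (x : ℝ) → 1 ≤ ph βA αA βH αH x := by
  have hδ0 : βA - βH ≠ 0 := sub_ne_zero.mpr hβne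
  have ha : 0 < (βA - βH) ^ 2 := by positivity
  refine ⟨max 1 ((|2 * (βA - βH) * (αA - αH) - 4 * (βA + βH)| +
      |(αA - αH) ^ 2 - 4 * (αA + αH)|) / (βA - βH) ^ 2), fun x hx => ?_⟩
  have ht1 : (1:ℝ) ≤ (x:ℝ) := le_trans (le_max_left _ _) hx
  have ht2 := le_trans (le_max_right _ _) hx
  have hquad := quad_ge ((βA - βH) ^ 2) (2 * (βA - βH) * (αA - αH) - 4 * (βA + βH))
    ((αA - αH) ^ 2 - 4 * (αA + αH)) (x:ℝ) ha ht1 ht2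
  have hp := fl_pos hβA hαA x
  have hq := fl_pos hβH hαH x
  have hkey : 4 * (fl βA αA x + fl βH αH x) ≤ (fl βA αA x - fl βH αH x) ^ 2 := by
    unfold fl; unfold fl at hp hq; nlinarith [hquad]
  have h2 := sq_sqrt_diff_ge _ _ hp hq hkey
  have htwo := two_ph hβA hβH hαA hαH x
  linarith

lemma fl_eq_unique (hβne : βA ≠ βH) {x y : ℕ}
    (hx : fl βA αA x = fl βH αH x) (hy : fl βA αA y = fl βH αH y) : x = y := by
  unfold fl at hx hy
  have h1 : (βA - βH) * (x:ℝ) = αH - αA := by linarith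
  have h2 : (βA - βH) * (y:ℝ) = αH - αA := by linarith
  have hδ : βA - βH ≠ 0 := sub_ne_zero.mpr hβne
  have : (x:ℝ) = (y:ℝ) := by
    have h3 := h1.trans h2.symm
    exact mul_left_cancel₀ hδ h3
  exact_mod_cast this

lemma exists_c (hβA : 0 < βA) (hβH : 0 < βH) (hαA : 0 < αA) (hαH : 0 < αH)
    (hβne : βA ≠ βH) :
    ∃ c : ℝ, 0 < c ∧ c ≤ 1 ∧
      ∀ x : ℕ, fl βA αA x ≠ fl βH αH x → c ≤ ph βA αA βH αH x := by
  obtain ⟨R, hR⟩ := ph_large hβA hβH hαA hαH hβne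
  obtain ⟨N, hNR⟩ := exists_nat_ge R
  classical
  set s : Finset ℝ :=
    insert (1:ℝ) (((Finset.range N).filter
      (fun x => fl βA αA x ≠ fl βH αH x)).image (ph βA αA βH αH)) with hs
  have hsne : s.Nonempty := ⟨1, Finset.mem_insert_self _ _⟩
  refine ⟨s.min' hsne, ?_, ?_, ?_⟩
  · rw [Finset.lt_min'_iff]
    intro y hy
    rw [hs, Finset.mem_insert] at hy
    rcases hy with h1 | h2
    · rw [h1]; norm_num
    · obtain ⟨x, hx, rfl⟩ := Finset.mem_image.mp h2
      exact ph_pos_of_ne hβA hβH hαA hαH x (Finset.mem_filter.mp hx).2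
  · exact Finset.min'_le s 1 (Finset.mem_insert_self _ _)
  · intro x hne
    by_cases hxN : x < N
    · refine Finset.min'_le s _ ?_
      rw [hs, Finset.mem_insert]
      right
      exact Finset.mem_image.mpr ⟨x, Finset.mem_filter.mpr ⟨Finset.mem_range.mpr hxN, hne⟩, rfl⟩
    · have : (1:ℝ) ≤ ph βA αA βH αH x := by
        refine hR x ?_
        push_cast
        calc R ≤ (N:ℝ) := hNR
          _ ≤ (x:ℝ) := by exact_mod_cast Nat.cast_le.mpr (le_of_not_gt hxN)
      calc s.min' hsne ≤ 1 := Finset.min'_le s 1 (Finset.mem_insert_self _ _)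
        _ ≤ _ := this

end Sep

open scoped ENNReal

def prevOf (x : ℕ) {n : ℕ} (ω : Fin n → ℕ) (k : Fin n) : ℕ :=
  if (k : ℕ) = 0 then x else ω ⟨(k : ℕ) - 1, Nat.lt_of_le_of_lt (Nat.sub_le _ _) k.2⟩

noncomputable def pathSum (f : ℕ → ℕ → ℝ≥0∞) (n x : ℕ) : ℝ≥0∞ :=
  ∑' ω : Fin n → ℕ, ∏ k, f (prevOf x ω k) (ω k)

lemma pathSum_zero (f : ℕ → ℕ → ℝ≥0∞) (x : ℕ) : pathSum f 0 x = 1 := by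
  unfold pathSum
  rw [tsum_eq_single (fun k => k.elim0) (by intro b hb; exact absurd (Subsingleton.elim _ _) hb)]
  simp

lemma prevOf_cons (x y : ℕ) {n : ℕ} (ω : Fin n → ℕ) (k : Fin n) :
    prevOf x (Fin.cons (α := fun _ => ℕ) y ω) k.succ = prevOf y ω k := by
  rcases k with ⟨j, hj⟩
  cases j with
  | zero =>
    show prevOf x (Fin.cons y ω) ⟨1, by omega⟩ = prevOf y ω ⟨0, hj⟩
    simp [prevOf]
  | succ i =>
    show prevOf x (Fin.cons y ω) ⟨i + 2, by omega⟩ = prevOf y ω ⟨i + 1, hj⟩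
    simp only [prevOf]
    norm_num
    show (Fin.cons y ω : ∀ _ : Fin (n+1), ℕ) ⟨i + 1, by omega⟩ = ω ⟨i, by omega⟩
    have : (⟨i + 1, by omega⟩ : Fin (n + 1)) = Fin.succ ⟨i, by omega⟩ := rfl
    rw [this, Fin.cons_succ]

lemma prod_cons_eq (f : ℕ → ℕ → ℝ≥0∞) (x y : ℕ) {n : ℕ} (ω : Fin n → ℕ) :
    (∏ k : Fin (n + 1),
        f (prevOf x (Fin.cons (α := fun _ => ℕ) y ω) k)
          (Fin.cons (α := fun _ => ℕ) y ω k))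
      = f x y * ∏ k : Fin n, f (prevOf y ω k) (ω k) := by
  have hfun : ∀ k : Fin (n + 1),
      f (prevOf x (Fin.cons (α := fun _ => ℕ) y ω) k) (Fin.cons (α := fun _ => ℕ) y ω k)
        = Fin.cons (α := fun _ => ℝ≥0∞) (f x y) (fun k => f (prevOf y ω k) (ω k)) k := by
    refine Fin.cases ?_ ?_
    · simp [prevOf]
    · intro k
      rw [prevOf_cons, Fin.cons_succ, Fin.cons_succ]
  rw [Finset.prod_congr rfl fun k _ => hfun k, Fin.prod_cons]

lemma pathSum_succ (f : ℕ → ℕ → ℝ≥0∞) (n x : ℕ) :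
    pathSum f (n + 1) x = ∑' y, f x y * pathSum f n y := by
  have h1 : pathSum f (n + 1) x = ∑' c : ℕ × (Fin n → ℕ),
      ∏ k : Fin (n + 1),
        f (prevOf x (Fin.cons (α := fun _ => ℕ) c.1 c.2) k)
          (Fin.cons (α := fun _ => ℕ) c.1 c.2 k) :=
    (Equiv.tsum_eq (Fin.consEquiv fun _ => ℕ) _).symm
  rw [h1]
  refine (ENNReal.tsum_prod (f := fun y ω => ∏ k : Fin (n + 1),
      f (prevOf x (Fin.cons (α := fun _ => ℕ) y ω) k)
        (Fin.cons (α := fun _ => ℕ) y ω k))).trans ?_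
  refine tsum_congr fun y => ?_
  unfold pathSum
  rw [← ENNReal.tsum_mul_left]
  exact tsum_congr fun ω => prod_cons_eq f x y ω

noncomputable def Sfun (βA αA βH αH : ℝ) (x : ℕ) : ℝ :=
  ∑' y, poi (mm βA αA βH αH x) y * Real.exp (-(ph βA αA βH αH y))

section Sep2

variable {βA βH αA αH : ℝ}

lemma mm_nonneg (x : ℕ) : 0 ≤ mm βA αA βH αH x := Real.sqrt_nonneg _

lemma S_term_nonneg (x y : ℕ) :
    0 ≤ poi (mm βA αA βH αH x) y * Real.exp (-(ph βA αA βH αH y)) :=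
  mul_nonneg (poi_nonneg (mm_nonneg x) y) (Real.exp_nonneg _)

lemma S_term_le (hβA : 0 < βA) (hβH : 0 < βH) (hαA : 0 < αA) (hαH : 0 < αH) (x y : ℕ) :
    poi (mm βA αA βH αH x) y * Real.exp (-(ph βA αA βH αH y)) ≤ poi (mm βA αA βH αH x) y := by
  have h1 : Real.exp (-(ph βA αA βH αH y)) ≤ 1 :=
    Real.exp_le_one_iff.mpr (neg_nonpos.mpr (ph_nonneg hβA hβH hαA hαH y))
  have h2 := poi_nonneg (mm_nonneg (βA := βA) (αA := αA) (βH := βH) (αH := αH) x) y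
  nlinarith

lemma summable_S (hβA : 0 < βA) (hβH : 0 < βH) (hαA : 0 < αA) (hαH : 0 < αH) (x : ℕ) :
    Summable (fun y => poi (mm βA αA βH αH x) y * Real.exp (-(ph βA αA βH αH y))) :=
  Summable.of_nonneg_of_le (S_term_nonneg x) (S_term_le hβA hβH hαA hαH x)
    (summable_poi _)

lemma S_nonneg (x : ℕ) : 0 ≤ Sfun βA αA βH αH x :=
  tsum_nonneg (S_term_nonneg x)

lemma S_le_one (hβA : 0 < βA) (hβH : 0 < βH) (hαA : 0 < αA) (hαH : 0 < αH) (x : ℕ) :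
    Sfun βA αA βH αH x ≤ 1 := by
  unfold Sfun
  calc ∑' y, poi (mm βA αA βH αH x) y * Real.exp (-(ph βA αA βH αH y))
      ≤ ∑' y, poi (mm βA αA βH αH x) y :=
        Summable.tsum_le_tsum (S_term_le hβA hβH hαA hαH x) (summable_S hβA hβH hαA hαH x)
          (summable_poi _)
    _ = 1 := tsum_poi_one _

lemma S_le_at (hβA : 0 < βA) (hβH : 0 < βH) (hαA : 0 < αA) (hαH : 0 < αH) (x y₀ : ℕ) :
    Sfun βA αA βH αH x
      ≤ 1 - poi (mm βA αA βH αH x) y₀ * (1 - Real.exp (-(ph βA αA βH αH y₀))) := by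
  set m := mm βA αA βH αH x with hm
  have hmn : 0 ≤ m := mm_nonneg x
  set d := poi m y₀ * (Real.exp (-(ph βA αA βH αH y₀)) - 1) with hd
  have hsum2 : Summable (fun y : ℕ => if y = y₀ then d else 0) :=
    (hasSum_ite_eq y₀ d).summable
  have hle : ∀ y : ℕ, poi m y * Real.exp (-(ph βA αA βH αH y))
      ≤ poi m y + (if y = y₀ then d else 0) := by
    intro y
    by_cases hy : y = y₀
    · subst hy
      rw [if_pos rfl, hd]
      have heq : poi m y + poi m y * (Real.exp (-(ph βA αA βH αH y)) - 1)
          = poi m y * Real.exp (-(ph βA αA βH αH y)) := by ring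
      rw [heq]
    · rw [if_neg hy, add_zero]
      exact S_term_le hβA hβH hαA hαH x y
  calc Sfun βA αA βH αH x
      ≤ ∑' y, (poi m y + if y = y₀ then d else 0) :=
        Summable.tsum_le_tsum hle (summable_S hβA hβH hαA hαH x) ((summable_poi m).add hsum2)
    _ = (∑' y, poi m y) + ∑' y, (if y = y₀ then d else 0) :=
        Summable.tsum_add (summable_poi m) hsum2
    _ = 1 + d := by rw [tsum_poi_one, (hasSum_ite_eq y₀ d).tsum_eq]
    _ = 1 - poi m y₀ * (1 - Real.exp (-(ph βA αA βH αH y₀))) := by rw [hd]; ring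

lemma exists_rho (hβA : 0 < βA) (hβH : 0 < βH) (hαA : 0 < αA) (hαH : 0 < αH)
    (hβne : βA ≠ βH) :
    ∃ ρ : ℝ, 0 ≤ ρ ∧ ρ < 1 ∧
      ∀ x : ℕ, Real.exp (-(ph βA αA βH αH x)) * Sfun βA αA βH αH x ≤ ρ := by
  obtain ⟨c, hc0, hc1, hcb⟩ := exists_c hβA hβH hαA hαH hβne
  have hec1 : Real.exp (-c) < 1 := Real.exp_lt_one_iff.mpr (by linarith)
  have hbound_ne : ∀ x : ℕ, fl βA αA x ≠ fl βH αH x →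
      Real.exp (-(ph βA αA βH αH x)) * Sfun βA αA βH αH x ≤ Real.exp (-c) := by
    intro x hx
    have h1 : Real.exp (-(ph βA αA βH αH x)) ≤ Real.exp (-c) :=
      Real.exp_le_exp.mpr (neg_le_neg (hcb x hx))
    have h2 := S_le_one hβA hβH hαA hαH x
    have h3 := S_nonneg (βA := βA) (αA := αA) (βH := βH) (αH := αH) x
    nlinarith [Real.exp_nonneg (-(ph βA αA βH αH x))]
  by_cases hZ : ∃ x₀ : ℕ, fl βA αA x₀ = fl βH αH x₀
  · obtain ⟨x₀, hx₀⟩ := hZ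
    have hmmpos : 0 < mm βA αA βH αH x₀ :=
      Real.sqrt_pos.mpr (mul_pos (fl_pos hβA hαA x₀) (fl_pos hβH hαH x₀))
    set p₀ := poi (mm βA αA βH αH x₀) (x₀ + 1) with hp₀
    have hp₀pos : 0 < p₀ := poi_pos hmmpos _
    have hp₀le : p₀ ≤ 1 := by
      have := tsum_poi_one (mm βA αA βH αH x₀)
      have hle := Summable.le_tsum (summable_poi (mm βA αA βH αH x₀)) (x₀ + 1)
        (fun y _ => poi_nonneg hmmpos.le y)
      rw [this] at hle; exact hle
    have hy0 : fl βA αA (x₀ + 1) ≠ fl βH αH (x₀ + 1) := by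
      intro h
      have := fl_eq_unique hβne hx₀ h
      omega
    refine ⟨max (Real.exp (-c)) (1 - p₀ * (1 - Real.exp (-c))),
      le_trans (Real.exp_nonneg _) (le_max_left _ _), ?_, ?_⟩
    · exact max_lt hec1 (by nlinarith)
    · intro x
      by_cases hx : fl βA αA x = fl βH αH x
      · have hxx : x = x₀ := fl_eq_unique hβne hx hx₀
        subst hxx
        have hphx : ph βA αA βH αH x = 0 := by
          unfold ph mm
          rw [← hx, Real.sqrt_mul_self (fl_pos hβA hαA x).le]
          ring
        rw [hphx]
        simp only [neg_zero, Real.exp_zero, one_mul]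
        have h1 := S_le_at hβA hβH hαA hαH x (x + 1)
        have h2 : Real.exp (-(ph βA αA βH αH (x + 1))) ≤ Real.exp (-c) :=
          Real.exp_le_exp.mpr (neg_le_neg (hcb _ hy0))
        refine le_trans ?_ (le_max_right _ _)
        calc Sfun βA αA βH αH x
            ≤ 1 - poi (mm βA αA βH αH x) (x + 1)
                * (1 - Real.exp (-(ph βA αA βH αH (x + 1)))) := h1
          _ ≤ 1 - p₀ * (1 - Real.exp (-c)) := by
              rw [hp₀]
              nlinarith [h2, poi_pos hmmpos (x + 1)]
      · exact le_trans (hbound_ne x hx) (le_max_left _ _)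
  · push_neg at hZ
    exact ⟨Real.exp (-c), Real.exp_nonneg _, hec1, fun x => hbound_ne x (hZ x)⟩

end Sep2

noncomputable def Gk (βA αA βH αH : ℝ) (x y : ℕ) : ℝ≥0∞ :=
  ENNReal.ofReal (Real.sqrt (gwStep βA αA x y * gwStep βH αH x y))

section Sep3

variable {βA βH αA αH : ℝ}

lemma step_tsum_one {β α : ℝ} (hβ : 0 < β) (hα : 0 < α) (x : ℕ) :
    ∑' y, ENNReal.ofReal (gwStep β α x y) = 1 := by
  have h0 : ∀ y, ENNReal.ofReal (gwStep β α x y) = ENNReal.ofReal (poi (fl β α x) y) :=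
    fun y => rfl
  rw [tsum_congr h0,
    ← ENNReal.ofReal_tsum_of_nonneg (fun y => poi_nonneg (fl_pos hβ hα x).le y)
      (summable_poi _), tsum_poi_one, ENNReal.ofReal_one]

lemma pathSum_step_one {β α : ℝ} (hβ : 0 < β) (hα : 0 < α) :
    ∀ n x, pathSum (fun x y => ENNReal.ofReal (gwStep β α x y)) n x = 1 := by
  intro n
  induction n with
  | zero => intro x; exact pathSum_zero _ _
  | succ n ih =>
    intro x
    rw [pathSum_succ]
    rw [tsum_congr fun y => by rw [ih y, mul_one]]
    exact step_tsum_one hβ hα x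

lemma G_tsum (hβA : 0 < βA) (hβH : 0 < βH) (hαA : 0 < αA) (hαH : 0 < αH) (x : ℕ) :
    ∑' y, Gk βA αA βH αH x y = ENNReal.ofReal (Real.exp (-(ph βA αA βH αH x))) := by
  have h1 : ∀ y, Gk βA αA βH αH x y
      = ENNReal.ofReal (Real.exp (-(ph βA αA βH αH x)) * poi (mm βA αA βH αH x) y) :=
    fun y => by rw [Gk, sqrt_gwStep hβA hβH hαA hαH]
  rw [tsum_congr h1,
    ← ENNReal.ofReal_tsum_of_nonneg
      (fun y => mul_nonneg (Real.exp_nonneg _) (poi_nonneg (mm_nonneg x) y))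
      ((summable_poi _).mul_left _),
    tsum_mul_left, tsum_poi_one, mul_one]

lemma G_tsum_le_one (hβA : 0 < βA) (hβH : 0 < βH) (hαA : 0 < αA) (hαH : 0 < αH) (x : ℕ) :
    ∑' y, Gk βA αA βH αH x y ≤ 1 := by
  rw [G_tsum hβA hβH hαA hαH x]
  exact ENNReal.ofReal_le_one.mpr
    (Real.exp_le_one_iff.mpr (neg_nonpos.mpr (ph_nonneg hβA hβH hαA hαH x)))

lemma K_le (hβA : 0 < βA) (hβH : 0 < βH) (hαA : 0 < αA) (hαH : 0 < αH)
    {ρ : ℝ} (hρ : ∀ x, Real.exp (-(ph βA αA βH αH x)) * Sfun βA αA βH αH x ≤ ρ) (x : ℕ) :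
    ∑' y, Gk βA αA βH αH x y * ENNReal.ofReal (Real.exp (-(ph βA αA βH αH y)))
      ≤ ENNReal.ofReal ρ := by
  have h1 : ∀ y, Gk βA αA βH αH x y * ENNReal.ofReal (Real.exp (-(ph βA αA βH αH y)))
      = ENNReal.ofReal (Real.exp (-(ph βA αA βH αH x))
          * (poi (mm βA αA βH αH x) y * Real.exp (-(ph βA αA βH αH y)))) := by
    intro y
    rw [Gk, sqrt_gwStep hβA hβH hαA hαH, ← ENNReal.ofReal_mul
      (mul_nonneg (Real.exp_nonneg _) (poi_nonneg (mm_nonneg x) y)), mul_assoc]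
  rw [tsum_congr h1,
    ← ENNReal.ofReal_tsum_of_nonneg
      (fun y => mul_nonneg (Real.exp_nonneg _) (S_term_nonneg x y))
      ((summable_S hβA hβH hαA hαH x).mul_left _),
    tsum_mul_left]
  exact ENNReal.ofReal_le_ofReal (hρ x)

lemma pathSum_G_le_one (hβA : 0 < βA) (hβH : 0 < βH) (hαA : 0 < αA) (hαH : 0 < αH) :
    ∀ n x, pathSum (Gk βA αA βH αH) n x ≤ 1 := by
  intro n
  induction n with
  | zero => intro x; rw [pathSum_zero]
  | succ n ih =>
    intro x
    rw [pathSum_succ]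
    calc ∑' y, Gk βA αA βH αH x y * pathSum (Gk βA αA βH αH) n y
        ≤ ∑' y, Gk βA αA βH αH x y * 1 :=
          ENNReal.tsum_le_tsum fun y => mul_le_mul_right (ih y) _
      _ = ∑' y, Gk βA αA βH αH x y := by simp
      _ ≤ 1 := G_tsum_le_one hβA hβH hαA hαH x

lemma pathSum_G_le (hβA : 0 < βA) (hβH : 0 < βH) (hαA : 0 < αA) (hαH : 0 < αH)
    {ρ : ℝ} (hρ : ∀ x, Real.exp (-(ph βA αA βH αH x)) * Sfun βA αA βH αH x ≤ ρ) :
    ∀ n x, pathSum (Gk βA αA βH αH) n x ≤ (ENNReal.ofReal ρ) ^ (n / 2) := by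
  intro n
  induction n using Nat.strong_induction_on with
  | _ n ih =>
    match n with
    | 0 => intro x; rw [pathSum_zero]; simp
    | 1 =>
      intro x
      simpa using pathSum_G_le_one hβA hβH hαA hαH 1 x
    | (n + 2) =>
      intro x
      have hstep : ∀ y, pathSum (Gk βA αA βH αH) (n + 1) y
          ≤ ENNReal.ofReal (Real.exp (-(ph βA αA βH αH y))) * (ENNReal.ofReal ρ) ^ (n / 2) := by
        intro y
        rw [pathSum_succ]
        calc ∑' z, Gk βA αA βH αH y z * pathSum (Gk βA αA βH αH) n z
            ≤ ∑' z, Gk βA αA βH αH y z * (ENNReal.ofReal ρ) ^ (n / 2) :=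
              ENNReal.tsum_le_tsum fun z => mul_le_mul_right (ih n (by omega) z) _
          _ = (∑' z, Gk βA αA βH αH y z) * (ENNReal.ofReal ρ) ^ (n / 2) :=
              ENNReal.tsum_mul_right
          _ = ENNReal.ofReal (Real.exp (-(ph βA αA βH αH y))) * (ENNReal.ofReal ρ) ^ (n / 2) := by
              rw [G_tsum hβA hβH hαA hαH]
      calc pathSum (Gk βA αA βH αH) (n + 2) x
          = ∑' y, Gk βA αA βH αH x y * pathSum (Gk βA αA βH αH) (n + 1) y :=
            pathSum_succ _ _ _
        _ ≤ ∑' y, Gk βA αA βH αH x y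
              * (ENNReal.ofReal (Real.exp (-(ph βA αA βH αH y))) * (ENNReal.ofReal ρ) ^ (n / 2)) :=
            ENNReal.tsum_le_tsum fun y => mul_le_mul_right (hstep y) _
        _ = (∑' y, Gk βA αA βH αH x y * ENNReal.ofReal (Real.exp (-(ph βA αA βH αH y))))
              * (ENNReal.ofReal ρ) ^ (n / 2) := by
            simp_rw [← mul_assoc]
            exact ENNReal.tsum_mul_right
        _ ≤ ENNReal.ofReal ρ * (ENNReal.ofReal ρ) ^ (n / 2) :=
            mul_le_mul_left (K_le hβA hβH hαA hαH hρ x) _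
        _ = (ENNReal.ofReal ρ) ^ ((n + 2) / 2) := by
            rw [Nat.add_div_right n (by norm_num), pow_succ, mul_comm]

end Sep3

lemma sqrt_prod {ι : Type*} (s : Finset ι) (f : ι → ℝ) (hf : ∀ i ∈ s, 0 ≤ f i) :
    Real.sqrt (∏ i ∈ s, f i) = ∏ i ∈ s, Real.sqrt (f i) := by
  classical
  induction s using Finset.induction_on with
  | empty => simp
  | @insert a s' ha ih =>
    rw [Finset.prod_insert ha, Finset.prod_insert ha,
      Real.sqrt_mul (hf a (Finset.mem_insert_self a s')),
      ih fun i hi' => hf i (Finset.mem_insert_of_mem hi')]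

section Final

variable {βA βH αA αH : ℝ}

lemma gwStep_nonneg {β α : ℝ} (hβ : 0 < β) (hα : 0 < α) (x y : ℕ) :
    0 ≤ gwStep β α x y := by
  rw [gwStep_eq_poi]; exact poi_nonneg (fl_pos hβ hα x).le y

lemma gwPath_eq_prod (β α : ℝ) (ω₀ n : ℕ) (ω : Fin n → ℕ) :
    gwPath β α ω₀ n ω = ∏ k, gwStep β α (prevOf ω₀ ω k) (ω k) := rfl

lemma gwPath_nonneg {β α : ℝ} (hβ : 0 < β) (hα : 0 < α) (ω₀ n : ℕ) (ω : Fin n → ℕ) :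
    0 ≤ gwPath β α ω₀ n ω :=
  Finset.prod_nonneg fun k _ => gwStep_nonneg hβ hα _ _

lemma ofReal_gwPath {β α : ℝ} (hβ : 0 < β) (hα : 0 < α) (ω₀ n : ℕ) (ω : Fin n → ℕ) :
    ENNReal.ofReal (gwPath β α ω₀ n ω)
      = ∏ k, ENNReal.ofReal (gwStep β α (prevOf ω₀ ω k) (ω k)) := by
  rw [gwPath_eq_prod]
  exact ENNReal.ofReal_prod_of_nonneg fun k _ => gwStep_nonneg hβ hα _ _

lemma ofReal_sqrt_path (hβA : 0 < βA) (hβH : 0 < βH) (hαA : 0 < αA) (hαH : 0 < αH)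
    (ω₀ n : ℕ) (ω : Fin n → ℕ) :
    ENNReal.ofReal (Real.sqrt (gwPath βA αA ω₀ n ω * gwPath βH αH ω₀ n ω))
      = ∏ k, Gk βA αA βH αH (prevOf ω₀ ω k) (ω k) := by
  rw [gwPath_eq_prod, gwPath_eq_prod, ← Finset.prod_mul_distrib,
    sqrt_prod _ _ fun k _ =>
      mul_nonneg (gwStep_nonneg hβA hαA _ _) (gwStep_nonneg hβH hαH _ _)]
  exact ENNReal.ofReal_prod_of_nonneg fun k _ => Real.sqrt_nonneg _

lemma tsum_path_one {β α : ℝ} (hβ : 0 < β) (hα : 0 < α) (ω₀ n : ℕ) :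
    ∑' ω : Fin n → ℕ, ENNReal.ofReal (gwPath β α ω₀ n ω) = 1 := by
  rw [tsum_congr fun ω => ofReal_gwPath hβ hα ω₀ n ω]
  exact pathSum_step_one hβ hα n ω₀

lemma tsum_sqrt_path (hβA : 0 < βA) (hβH : 0 < βH) (hαA : 0 < αA) (hαH : 0 < αH)
    (ω₀ n : ℕ) :
    ∑' ω : Fin n → ℕ, ENNReal.ofReal
        (Real.sqrt (gwPath βA αA ω₀ n ω * gwPath βH αH ω₀ n ω))
      = pathSum (Gk βA αA βH αH) n ω₀ :=
  tsum_congr fun ω => ofReal_sqrt_path hβA hβH hαA hαH ω₀ n ω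

end Final

lemma le_sqrt_mul {p q : ℝ} (hq : 0 ≤ q) (h : q ≤ p) : q ≤ Real.sqrt (p * q) := by
  rw [Real.le_sqrt hq (by nlinarith)]
  nlinarith


/-- For strictly positive parameters with `β_A ≠ β_H`
(the union `P_SP,1 ∪ P_SP,2 ∪ P_SP,3ab ∪ P_SP,3c ∪ P_SP,3d`), the sequences of path laws
`(P_{A,n})` and `(P_{H,n})` are entirely separated. -/
theorem entirely_separated (βA βH αA αH : ℝ)
    (hβA : 0 < βA) (hβH : 0 < βH) (hαA : 0 < αA) (hαH : 0 < αH)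
    (hne : (βA, αA) ≠ (βH, αH)) (hβne : βA ≠ βH)
    (ω₀ : ℕ) (hω₀ : 1 ≤ ω₀) :
    ∃ nm : ℕ → ℕ, StrictMono nm ∧
      ∃ A : (m : ℕ) → Set (Fin (nm m) → ℕ),
        Tendsto (fun m : ℕ => ∑' ω : ↥(A m), gwPath βA αA ω₀ (nm m) ω.1) atTop (nhds 1) ∧
        Tendsto (fun m : ℕ => ∑' ω : ↥(A m), gwPath βH αH ω₀ (nm m) ω.1) atTop (nhds 0) := by
  classical
  obtain ⟨ρ, hρ0, hρ1, hρb⟩ := exists_rho hβA hβH hαA hαH hβne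
  set An : (n : ℕ) → Set (Fin n → ℕ) :=
    fun n => {ω | gwPath βH αH ω₀ n ω ≤ gwPath βA αA ω₀ n ω} with hAn
  -- ENNReal-valued partial sums
  set S1 : ℕ → ℝ≥0∞ :=
    fun n => ∑' ω : ↥(An n), ENNReal.ofReal (gwPath βA αA ω₀ n ω.1) with hS1d
  set S1c : ℕ → ℝ≥0∞ :=
    fun n => ∑' ω : ↥(An n)ᶜ, ENNReal.ofReal (gwPath βA αA ω₀ n ω.1) with hS1cd
  set S2 : ℕ → ℝ≥0∞ :=
    fun n => ∑' ω : ↥(An n), ENNReal.ofReal (gwPath βH αH ω₀ n ω.1) with hS2d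
  have hDle : ∀ n, pathSum (Gk βA αA βH αH) n ω₀ ≤ ENNReal.ofReal (ρ ^ (n / 2)) := by
    intro n
    rw [ENNReal.ofReal_pow hρ0]
    exact pathSum_G_le hβA hβH hαA hαH hρb n ω₀
  -- total mass one, split over An and its complement
  have key1 : ∀ n, S1 n + S1c n = 1 := by
    intro n
    have hsplit := Summable.tsum_union_disjoint
      (f := fun ω : Fin n → ℕ => ENNReal.ofReal (gwPath βA αA ω₀ n ω))
      (disjoint_compl_right (a := An n)) ENNReal.summable ENNReal.summable
    rw [← hsplit, Set.union_compl_self]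
    exact (tsum_univ _).trans (tsum_path_one hβA hαA ω₀ n)
  -- Hellinger-type bounds
  have hS2le : ∀ n, S2 n ≤ ENNReal.ofReal (ρ ^ (n / 2)) := by
    intro n
    calc S2 n
        ≤ ∑' ω : ↥(An n), ENNReal.ofReal
            (Real.sqrt (gwPath βA αA ω₀ n ω.1 * gwPath βH αH ω₀ n ω.1)) :=
          ENNReal.tsum_le_tsum fun ω => ENNReal.ofReal_le_ofReal
            (le_sqrt_mul (gwPath_nonneg hβH hαH ω₀ n ω.1) ω.2)
      _ ≤ ∑' ω : Fin n → ℕ, ENNReal.ofReal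
            (Real.sqrt (gwPath βA αA ω₀ n ω * gwPath βH αH ω₀ n ω)) :=
          ENNReal.tsum_comp_le_tsum_of_injective Subtype.val_injective _
      _ = pathSum (Gk βA αA βH αH) n ω₀ := tsum_sqrt_path hβA hβH hαA hαH ω₀ n
      _ ≤ ENNReal.ofReal (ρ ^ (n / 2)) := hDle n
  have hS1cle : ∀ n, S1c n ≤ ENNReal.ofReal (ρ ^ (n / 2)) := by
    intro n
    calc S1c n
        ≤ ∑' ω : ↥(An n)ᶜ, ENNReal.ofReal
            (Real.sqrt (gwPath βA αA ω₀ n ω.1 * gwPath βH αH ω₀ n ω.1)) := by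
          refine ENNReal.tsum_le_tsum fun ω => ENNReal.ofReal_le_ofReal ?_
          have hω : gwPath βA αA ω₀ n ω.1 ≤ gwPath βH αH ω₀ n ω.1 :=
            le_of_not_ge ω.2
          have h := le_sqrt_mul (gwPath_nonneg hβA hαA ω₀ n ω.1) hω
          rwa [mul_comm] at h
      _ ≤ ∑' ω : Fin n → ℕ, ENNReal.ofReal
            (Real.sqrt (gwPath βA αA ω₀ n ω * gwPath βH αH ω₀ n ω)) :=
          ENNReal.tsum_comp_le_tsum_of_injective Subtype.val_injective _
      _ = pathSum (Gk βA αA βH αH) n ω₀ := tsum_sqrt_path hβA hβH hαA hαH ω₀ n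
      _ ≤ ENNReal.ofReal (ρ ^ (n / 2)) := hDle n
  -- finiteness
  have hS1fin : ∀ n, S1 n ≠ ⊤ := fun n =>
    (lt_of_le_of_lt (le_self_add.trans_eq (key1 n)) ENNReal.one_lt_top).ne
  have hS1cfin : ∀ n, S1c n ≠ ⊤ := fun n =>
    (lt_of_le_of_lt (le_add_self.trans_eq (key1 n)) ENNReal.one_lt_top).ne
  -- real-valued identities
  have hreal1 : ∀ n, (S1 n).toReal = ∑' ω : ↥(An n), gwPath βA αA ω₀ n ω.1 := by
    intro n
    rw [hS1d, ENNReal.tsum_toReal_eq fun _ => ENNReal.ofReal_ne_top]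
    exact tsum_congr fun ω => ENNReal.toReal_ofReal (gwPath_nonneg hβA hαA ω₀ n ω.1)
  have hreal2 : ∀ n, (S2 n).toReal = ∑' ω : ↥(An n), gwPath βH αH ω₀ n ω.1 := by
    intro n
    rw [hS2d, ENNReal.tsum_toReal_eq fun _ => ENNReal.ofReal_ne_top]
    exact tsum_congr fun ω => ENNReal.toReal_ofReal (gwPath_nonneg hβH hαH ω₀ n ω.1)
  have hsum_toReal : ∀ n, (S1 n).toReal + (S1c n).toReal = 1 := by
    intro n
    rw [← ENNReal.toReal_add (hS1fin n) (hS1cfin n), key1 n, ENNReal.toReal_one]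
  have hS1cR : ∀ n, (S1c n).toReal ≤ ρ ^ (n / 2) := fun n =>
    ENNReal.toReal_le_of_le_ofReal (pow_nonneg hρ0 _) (hS1cle n)
  have hS2R : ∀ n, (S2 n).toReal ≤ ρ ^ (n / 2) := fun n =>
    ENNReal.toReal_le_of_le_ofReal (pow_nonneg hρ0 _) (hS2le n)
  -- the limit of the bound
  have hpow : Filter.Tendsto (fun m : ℕ => ρ ^ (m / 2)) Filter.atTop (nhds 0) := by
    have h2 : Filter.Tendsto (fun k : ℕ => ρ ^ k) Filter.atTop (nhds 0) :=
      tendsto_pow_atTop_nhds_zero_of_lt_one hρ0 hρ1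
    have hdiv : Filter.Tendsto (fun m : ℕ => m / 2) Filter.atTop Filter.atTop :=
      Filter.tendsto_atTop_atTop.mpr fun b => ⟨2 * b, fun a ha => by omega⟩
    exact h2.comp hdiv
  refine ⟨fun m => m, fun a b h => h, An, ?_, ?_⟩
  · -- sums under P_A tend to 1
    have hup : ∀ n, (S1 n).toReal ≤ 1 := by
      intro n
      have := hsum_toReal n
      have h0 : 0 ≤ (S1c n).toReal := ENNReal.toReal_nonneg
      linarith
    have hlow : ∀ n, 1 - ρ ^ (n / 2) ≤ (S1 n).toReal := by
      intro n
      have := hsum_toReal n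
      have := hS1cR n
      linarith
    have hlimlow : Filter.Tendsto (fun m : ℕ => 1 - ρ ^ (m / 2)) Filter.atTop (nhds 1) := by
      simpa using tendsto_const_nhds.sub hpow
    have := tendsto_of_tendsto_of_tendsto_of_le_of_le hlimlow tendsto_const_nhds
      (fun m => hlow m) (fun m => hup m)
    refine Filter.Tendsto.congr (fun m => hreal1 m) this
  · -- sums under P_H tend to 0
    have h0 : ∀ n, 0 ≤ (S2 n).toReal := fun n => ENNReal.toReal_nonneg
    have := squeeze_zero h0 hS2R hpow
    refine Filter.Tendsto.congr (fun m => hreal2 m) this
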